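/- Let Φ be an irreducible root system and suppose α, β ∈ Φ are roots with (α,α) = (β,β) (equal length). Then α and β lie in the same orbit of the Weyl group W. -/

import Mathlib

variable {V : Type*} [NormedAddCommGroup V] [InnerProductSpace ℝ V]

/-- The Cartan pairing `⟨β, α⟩ = 2(β,α)/(α,α)`. -/
noncomputable def pairingR (β α : V) : ℝ := 2 * (inner ℝ β α : ℝ) / (inner ℝ α α : ℝ)

/-- The reflection in `α`, `v ↦ v − ⟨v,α⟩α` (junk value: the identity, if `α = 0`). -/
noncomputable def rfln (α : V) : V ≃ₗ[ℝ] V :=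
  if h : (inner ℝ α α : ℝ) ≠ 0 then
    Module.reflection (f := (2 / (inner ℝ α α : ℝ)) • innerₛₗ ℝ α) (x := α)
      (by simp only [LinearMap.smul_apply, innerₛₗ_apply_apply, smul_eq_mul]; field_simp)
  else LinearEquiv.refl ℝ V

/-- `Φ` is a (reduced, crystallographic) root system. -/
structure IsRootSystem (Φ : Finset V) : Prop where
  ne_zero : ∀ α ∈ Φ, α ≠ 0
  reduced : ∀ α ∈ Φ, ∀ t : ℝ, t • α ∈ Φ → t = 1 ∨ t = -1
  reflect : ∀ α ∈ Φ, ∀ β ∈ Φ, β - pairingR β α • α ∈ Φ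
  crystal : ∀ α ∈ Φ, ∀ β ∈ Φ, ∃ n : ℤ, pairingR β α = (n : ℝ)

/-- `α` is a positive root with respect to the simple system `Δ`. -/
def IsPos (Φ Δ : Finset V) (α : V) : Prop :=
  α ∈ Φ ∧ ∃ c : V → ℝ, (∀ b, 0 ≤ c b) ∧ α = ∑ b ∈ Δ, c b • b

/-- `Δ` is a base (set of simple roots) for `Φ`. -/
structure IsBase (Φ Δ : Finset V) : Prop where
  subset : Δ ⊆ Φ
  indep : LinearIndependent ℝ (fun b : ↥(Δ : Set V) => (b : V))
  pos_or_neg : ∀ α ∈ Φ, IsPos Φ Δ α ∨ IsPos Φ Δ (-α)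

/-- The finset of positive roots. -/
noncomputable def posF (Φ Δ : Finset V) : Finset V :=
  @Finset.filter _ (IsPos Φ Δ) (Classical.decPred _) Φ

/-- The product of the reflections in the listed roots (the rightmost acts first). -/
noncomputable def wprod (l : List V) : V ≃ₗ[ℝ] V := (l.map rfln).prod

/-- `Φ` is irreducible: it admits no partition into two nonempty mutually
orthogonal subsets. -/
def IsIrred (Φ : Finset V) : Prop :=
  (Φ : Set V).Nonempty ∧ ∀ s t : Set V, (Φ : Set V) = s ∪ t → Disjoint s t →
    (∀ a ∈ s, ∀ b ∈ t, (inner ℝ a b : ℝ) = 0) → s = ∅ ∨ t = ∅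

lemma rfln_apply' (γ v : V) (h : (inner ℝ γ γ : ℝ) ≠ 0) :
    rfln γ v = v - pairingR v γ • γ := by
  rw [rfln, dif_pos h, Module.reflection_apply]
  congr 1
  simp only [LinearMap.smul_apply, innerₛₗ_apply_apply, smul_eq_mul, pairingR]
  rw [real_inner_comm γ v]
  congr 1
  ring

lemma rfln_inner (γ u v : V) : (inner ℝ (rfln γ u) (rfln γ v) : ℝ) = inner ℝ u v := by
  by_cases h : (inner ℝ γ γ : ℝ) = 0
  · rw [rfln, dif_neg (by simpa using h)]; rfl
  · rw [rfln_apply' _ _ h, rfln_apply' _ _ h]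
    simp only [inner_sub_left, inner_sub_right, real_inner_smul_left, real_inner_smul_right,
      pairingR]
    rw [real_inner_comm γ v, real_inner_comm γ u]
    field_simp
    ring

lemma W_props {Φ : Finset V} (hΦ : IsRootSystem Φ) {w : V ≃ₗ[ℝ] V}
    (hw : w ∈ Subgroup.closure {s : V ≃ₗ[ℝ] V | ∃ γ ∈ Φ, s = rfln γ}) :
    (∀ v ∈ Φ, w v ∈ Φ) ∧ ∀ u v : V, (inner ℝ (w u) (w v) : ℝ) = inner ℝ u v := by
  classical
  induction hw using Subgroup.closure_induction with
  | mem s hs =>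
      obtain ⟨γ, hγ, rfl⟩ := hs
      have hq : (inner ℝ γ γ : ℝ) ≠ 0 := by
        simpa [inner_self_eq_zero] using hΦ.ne_zero γ hγ
      refine ⟨fun v hv => ?_, rfln_inner γ⟩
      rw [rfln_apply' _ _ hq]
      exact hΦ.reflect γ hγ v hv
  | one => exact ⟨fun v hv => hv, fun u v => rfl⟩
  | mul a b ha hb iha ihb =>
      refine ⟨fun v hv => iha.1 _ (ihb.1 v hv), fun u v => ?_⟩
      show (inner ℝ (a (b u)) (a (b v)) : ℝ) = _
      rw [iha.2, ihb.2]
  | inv a ha iha =>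
      have himg : Φ.image (fun v => a v) = Φ := by
        apply Finset.eq_of_subset_of_card_le
        · intro x hx
          obtain ⟨v, hv, rfl⟩ := Finset.mem_image.1 hx
          exact iha.1 v hv
        · rw [Finset.card_image_of_injective _ a.injective]
      constructor
      · intro v hv
        rw [← himg] at hv
        obtain ⟨u, hu, rfl⟩ := Finset.mem_image.1 hv
        show a⁻¹ (a u) ∈ Φ
        have : a⁻¹ (a u) = u := a.symm_apply_apply u
        rwa [this]
      · intro u v
        have h2 := iha.2 (a⁻¹ u) (a⁻¹ v)
        have e1 : a (a⁻¹ u) = u := a.apply_symm_apply u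
        have e2 : a (a⁻¹ v) = v := a.apply_symm_apply v
        rw [e1, e2] at h2
        exact h2.symm

lemma rfln_neg_self (β : V) (hq : (inner ℝ β β : ℝ) ≠ 0) : rfln β (-β) = β := by
  rw [rfln_apply' _ _ hq]
  have h : pairingR (-β) β = -2 := by
    unfold pairingR; rw [inner_neg_left]; field_simp
  rw [h]; module

/-- In an irreducible root system, any two roots of the same length lie in the
same orbit of the Weyl group. -/
theorem stmt17 (Φ : Finset V) (hΦ : IsRootSystem Φ) (hirr : IsIrred Φ)
    (α β : V) (hα : α ∈ Φ) (hβ : β ∈ Φ)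
    (hlen : (inner ℝ α α : ℝ) = (inner ℝ β β : ℝ)) :
    ∃ w ∈ Subgroup.closure {s : V ≃ₗ[ℝ] V | ∃ γ ∈ Φ, s = rfln γ}, w α = β := by
  classical
  have hqβ : (inner ℝ β β : ℝ) ≠ 0 := by
    simpa [inner_self_eq_zero] using hΦ.ne_zero β hβ
  have qβpos : (0:ℝ) < inner ℝ β β := lt_of_le_of_ne real_inner_self_nonneg (Ne.symm hqβ)
  set Wc := Subgroup.closure {s : V ≃ₗ[ℝ] V | ∃ γ ∈ Φ, s = rfln γ} with hWc
  set O : Set V := {v | ∃ w ∈ Wc, w α = v} with hO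
  set U : Submodule ℝ V := Submodule.span ℝ O with hU
  have hOstab : ∀ γ ∈ Φ, ∀ δ ∈ O, rfln γ δ ∈ O := by
    rintro γ hγ δ ⟨w, hw, rfl⟩
    exact ⟨rfln γ * w, mul_mem (Subgroup.subset_closure ⟨γ, hγ, rfl⟩) hw, rfl⟩
  have hdich : ∀ γ ∈ Φ, (γ : V) ∈ U ∨ ∀ δ ∈ O, (inner ℝ δ γ : ℝ) = 0 := by
    intro γ hγ
    by_cases hall : ∀ δ ∈ O, (inner ℝ δ γ : ℝ) = 0
    · exact Or.inr hall
    · push_neg at hall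
      obtain ⟨δ, hδ, hne⟩ := hall
      left
      have hq : (inner ℝ γ γ : ℝ) ≠ 0 := by
        simpa [inner_self_eq_zero] using hΦ.ne_zero γ hγ
      have hc : pairingR δ γ ≠ 0 := by
        unfold pairingR
        exact div_ne_zero (by simpa using hne) hq
      have hrep : γ = (pairingR δ γ)⁻¹ • (δ - rfln γ δ) := by
        rw [rfln_apply' _ _ hq]
        rw [sub_sub_cancel, smul_smul, inv_mul_cancel₀ hc, one_smul]
      rw [hrep]
      exact Submodule.smul_mem _ _ (Submodule.sub_mem _ (Submodule.subset_span hδ)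
        (Submodule.subset_span (hOstab γ hγ δ hδ)))
  have hαO : α ∈ O := ⟨1, one_mem _, rfl⟩
  have hΦsubU : ∀ γ ∈ Φ, (γ:V) ∈ U := by
    intro γ hγ
    by_contra hγU
    have hst := hirr.2 {x | x ∈ Φ ∧ x ∈ U} {x | x ∈ Φ ∧ x ∉ U}
      (by ext x; by_cases hx : x ∈ U <;> simp [hx]) 
      (by rw [Set.disjoint_left]; rintro x ⟨-, hx⟩ ⟨-, hx'⟩; exact hx' hx)
      (by
        rintro a ⟨haΦ, haU⟩ b ⟨hbΦ, hbU⟩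
        have horth : ∀ δ ∈ O, (inner ℝ δ b : ℝ) = 0 := by
          rcases hdich b hbΦ with h | h
          · exact absurd h hbU
          · exact h
        have hker : U ≤ LinearMap.ker (innerₛₗ ℝ b) := by
          rw [hU, Submodule.span_le]
          intro δ hδ
          simp only [SetLike.mem_coe, LinearMap.mem_ker, innerₛₗ_apply_apply]
          rw [real_inner_comm]
          exact horth δ hδ
        have := hker haU
        simp only [LinearMap.mem_ker, innerₛₗ_apply_apply] at this
        rw [real_inner_comm] at this
        exact this)
    rcases hst with h | h
    · exact Set.eq_empty_iff_forall_notMem.1 h α ⟨hα, Submodule.subset_span hαO⟩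
    · exact Set.eq_empty_iff_forall_notMem.1 h γ ⟨hγ, hγU⟩
  obtain ⟨w0, hw0, ha0⟩ : ∃ w ∈ Wc, (inner ℝ (w α) β : ℝ) ≠ 0 := by
    by_contra hcon
    push_neg at hcon
    have horth : ∀ δ ∈ O, (inner ℝ δ β : ℝ) = 0 := by
      rintro δ ⟨w, hw, rfl⟩
      exact hcon w hw
    have hker : U ≤ LinearMap.ker (innerₛₗ ℝ β) := by
      rw [hU, Submodule.span_le]
      intro δ hδ
      simp only [SetLike.mem_coe, LinearMap.mem_ker, innerₛₗ_apply_apply]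
      rw [real_inner_comm]
      exact horth δ hδ
    have := hker (hΦsubU β hβ)
    simp only [LinearMap.mem_ker, innerₛₗ_apply_apply] at this
    exact hqβ this
  -- now the rank-2 argument
  have hα'Φ : w0 α ∈ Φ := (W_props hΦ hw0).1 α hα
  have hq' : (inner ℝ (w0 α) (w0 α) : ℝ) = inner ℝ β β := by
    rw [(W_props hΦ hw0).2 α α]; exact hlen
  have hqα' : (inner ℝ (w0 α) (w0 α) : ℝ) ≠ 0 := by rw [hq']; exact hqβ
  have hcomm : (inner ℝ β (w0 α) : ℝ) = inner ℝ (w0 α) β := real_inner_comm (w0 α) β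
  obtain ⟨n, hn⟩ := hΦ.crystal β hβ (w0 α) hα'Φ
  have ha : (inner ℝ (w0 α) β : ℝ) = n * (inner ℝ β β : ℝ) / 2 := by
    unfold pairingR at hn
    field_simp at hn ⊢
    linarith
  have hn0 : n ≠ 0 := by
    rintro rfl
    rw [ha] at ha0
    simp at ha0
  have hCS := real_inner_mul_inner_self_le (w0 α) β
  rw [hq', ha] at hCS
  have hb1 : -2 ≤ n := by
    by_contra h
    push_neg at h
    have h3 : (n:ℝ) ≤ -3 := by exact_mod_cast Int.le_of_lt_add_one (by omega : n < -3 + 1)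
    have h9 : (9:ℝ) ≤ (n:ℝ) * n := by nlinarith [sq_nonneg ((n:ℝ) + 3)]
    have hq2 : (0:ℝ) < inner ℝ β β * inner ℝ β β := mul_pos qβpos qβpos
    nlinarith [mul_le_mul_of_nonneg_right h9 hq2.le]
  have hb2 : n ≤ 2 := by
    by_contra h
    push_neg at h
    have h3 : (3:ℝ) ≤ (n:ℝ) := by exact_mod_cast (by omega : (3:ℤ) ≤ n)
    have h9 : (9:ℝ) ≤ (n:ℝ) * n := by nlinarith [sq_nonneg ((n:ℝ) - 3)]
    have hq2 : (0:ℝ) < inner ℝ β β * inner ℝ β β := mul_pos qβpos qβpos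
    nlinarith [mul_le_mul_of_nonneg_right h9 hq2.le]
  interval_cases n
  · -- n = -2 : w0 α = -β
    push_cast at ha
    have heq : w0 α = -β := by
      have h0 : (inner ℝ (w0 α + β) (w0 α + β) : ℝ) = 0 := by
        rw [inner_add_left, inner_add_right, inner_add_right]
        linarith [hq', ha, hcomm]
      rw [inner_self_eq_zero] at h0
      linear_combination (norm := module) h0
    refine ⟨rfln β * w0, mul_mem (Subgroup.subset_closure ⟨β, hβ, rfl⟩) hw0, ?_⟩
    show rfln β (w0 α) = β
    rw [heq, rfln_neg_self β hqβ]
  · -- n = -1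
    push_cast at hn ha
    have e1 : rfln β (w0 α) = w0 α + β := by
      rw [rfln_apply' _ _ hqβ, hn]
      module
    have e2 : pairingR (w0 α + β) (w0 α) = 1 := by
      unfold pairingR
      rw [inner_add_left, div_eq_one_iff_eq hqα']
      linarith [hq', ha, hcomm]
    have e3 : rfln (w0 α) (w0 α + β) = β := by
      rw [rfln_apply' _ _ hqα', e2, one_smul]
      abel
    refine ⟨rfln (w0 α) * (rfln β * w0),
      mul_mem (Subgroup.subset_closure ⟨w0 α, hα'Φ, rfl⟩)
        (mul_mem (Subgroup.subset_closure ⟨β, hβ, rfl⟩) hw0), ?_⟩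
    show rfln (w0 α) (rfln β (w0 α)) = β
    rw [e1, e3]
  · omega
  · -- n = 1
    push_cast at hn ha
    have e1 : rfln β (w0 α) = w0 α - β := by
      rw [rfln_apply' _ _ hqβ, hn, one_smul]
    have e2 : pairingR (w0 α - β) (w0 α) = 1 := by
      unfold pairingR
      rw [inner_sub_left, div_eq_one_iff_eq hqα']
      linarith [hq', ha, hcomm]
    have e3 : rfln (w0 α) (w0 α - β) = -β := by
      rw [rfln_apply' _ _ hqα', e2, one_smul]
      abel
    refine ⟨rfln β * (rfln (w0 α) * (rfln β * w0)),
      mul_mem (Subgroup.subset_closure ⟨β, hβ, rfl⟩)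
        (mul_mem (Subgroup.subset_closure ⟨w0 α, hα'Φ, rfl⟩)
          (mul_mem (Subgroup.subset_closure ⟨β, hβ, rfl⟩) hw0)), ?_⟩
    show rfln β (rfln (w0 α) (rfln β (w0 α))) = β
    rw [e1, e3, rfln_neg_self β hqβ]
  · -- n = 2 : w0 α = β
    push_cast at ha
    have heq : w0 α = β := by
      have h0 : (inner ℝ (w0 α - β) (w0 α - β) : ℝ) = 0 := by
        rw [inner_sub_left, inner_sub_right, inner_sub_right]
        linarith [hq', ha, hcomm]
      rw [inner_self_eq_zero] at h0
      linear_combination (norm := module) h0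
    exact ⟨w0, hw0, heq⟩
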